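/- arXiv:2402.05724 — 2 statements merged into one kernel-verified Lean document; each statement's English description precedes it below -/
import Mathlib

section
/- Let M and M' be two mean-field MDPs on the same finite S, A, horizon H and initial distribution μ₁, and let π be a policy. Then for every h ∈ {1,…,H}: (a) ‖μ^π_{M,h+1} − μ^π_{M',h+1}‖₁ ≤ E_{π,M(π)}[Σ_{h'=1}^{h} ‖P_{M,h'}(·|s_{h'},a_{h'},μ^π_{M,h'}) − P_{M',h'}(·|s_{h'},a_{h'},μ^π_{M',h'})‖₁]; and (b) if additionally M' is L_T-Lipschitz in the density argument, i.e., ‖P_{M',h'}(·|s,a,μ) − P_{M',h'}(·|s,a,μ')‖₁ ≤ L_T·‖μ − μ'‖₁ for all h', s, a and all μ, μ' ∈ Δ(S), then ‖μ^π_{M,h+1} − μ^π_{M',h+1}‖₁ ≤ E_{π,M(π)}[Σ_{h'=1}^{h} (1+L_T)^{h−h'}·‖P_{M,h'}(·|s_{h'},a_{h'},μ^π_{M,h'}) − P_{M',h'}(·|s_{h'},a_{h'},μ^π_{M,h'})‖₁]. -/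
/-- ℓ1 distance between two functions on a finite type. -/
def l1 {X : Type*} [Fintype X] (p q : X → ℝ) : ℝ := ∑ x, |p x - q x|

/-- A (nonstationary Markov) policy: at each step `h` (0-indexed) and state `s`,
`π h s` is a probability distribution over actions. -/
def IsPolicy {S A : Type*} [Fintype A] (π : ℕ → S → A → ℝ) : Prop :=
  ∀ h s, (∀ a, 0 ≤ π h s a) ∧ ∑ a, π h s a = 1

/-- The transition kernels of a mean-field MDP with horizon `H`:
at each step `h < H`, `P h s a μ ∈ Δ(S)` whenever `μ ∈ Δ(S)`. -/
def IsKernel {S A : Type*} [Fintype S] (H : ℕ) (P : ℕ → S → A → (S → ℝ) → S → ℝ) : Prop :=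
  ∀ h, h < H → ∀ s a (μ : S → ℝ), μ ∈ stdSimplex ℝ S → P h s a μ ∈ stdSimplex ℝ S

/-- Induced state densities: `dens P μ₁ π h = μ^π_{M,h+1}` (1-indexed step `h+1`). -/
def dens {S A : Type*} [Fintype S] [Fintype A] (P : ℕ → S → A → (S → ℝ) → S → ℝ)
    (μ₁ : S → ℝ) (π : ℕ → S → A → ℝ) : ℕ → S → ℝ
  | 0 => μ₁
  | h + 1 => fun s' => ∑ s, ∑ a, dens P μ₁ π h s * π h s a * P h s a (dens P μ₁ π h) s'

/-- The state law of executing `π̃` while the kernels are frozen at the densities induced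
by the reference policy `π` in model `M = (P, μ₁)`. -/
def densF {S A : Type*} [Fintype S] [Fintype A] (P : ℕ → S → A → (S → ℝ) → S → ℝ)
    (μ₁ : S → ℝ) (π πt : ℕ → S → A → ℝ) : ℕ → S → ℝ
  | 0 => μ₁
  | h + 1 => fun s' => ∑ s, ∑ a, densF P μ₁ π πt h s * πt h s a * P h s a (dens P μ₁ π h) s'

/-- `E_{π̃,M(π)}[Σ_{h=1}^H f_h(s_h,a_h)]`. -/
def expF {S A : Type*} [Fintype S] [Fintype A] (H : ℕ) (P : ℕ → S → A → (S → ℝ) → S → ℝ)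
    (μ₁ : S → ℝ) (π πt : ℕ → S → A → ℝ) (f : ℕ → S → A → ℝ) : ℝ :=
  ∑ h ∈ Finset.range H, ∑ s, ∑ a, densF P μ₁ π πt h s * πt h s a * f h s a

/-- The return `J_M(π̃;π)` of executing `π̃` with transitions and rewards frozen by `π`. -/
def Jret {S A : Type*} [Fintype S] [Fintype A] (H : ℕ) (P : ℕ → S → A → (S → ℝ) → S → ℝ)
    (r : ℕ → S → A → (S → ℝ) → ℝ) (μ₁ : S → ℝ) (πt π : ℕ → S → A → ℝ) : ℝ :=
  expF H P μ₁ π πt fun h s a => r h s a (dens P μ₁ π h)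

/-- One-sided conditional model distance `d^{π̃}(M,M'|π)`. -/
def dCond {S A : Type*} [Fintype S] [Fintype A] (H : ℕ)
    (P P' : ℕ → S → A → (S → ℝ) → S → ℝ) (μ₁ : S → ℝ) (π πt : ℕ → S → A → ℝ) : ℝ :=
  expF H P μ₁ π πt fun h s a => l1 (P h s a (dens P μ₁ π h)) (P' h s a (dens P' μ₁ π h))

section aux
variable {S A : Type*} [Fintype S] [Fintype A]

lemma l1_self (p : S → ℝ) : l1 p p = 0 := by simp [l1]

lemma l1_triangle (p q r : S → ℝ) : l1 p r ≤ l1 p q + l1 q r := by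
  unfold l1
  rw [← Finset.sum_add_distrib]
  exact Finset.sum_le_sum fun x _ => abs_sub_le _ _ _

lemma step_mem (μ : S → ℝ) (hμ : μ ∈ stdSimplex ℝ S)
    (π : S → A → ℝ) (hπ : ∀ s, (∀ a, 0 ≤ π s a) ∧ ∑ a, π s a = 1)
    (Q : S → A → S → ℝ) (hQ : ∀ s a, Q s a ∈ stdSimplex ℝ S) :
    (fun s' => ∑ s, ∑ a, μ s * π s a * Q s a s') ∈ stdSimplex ℝ S := by
  constructor
  · intro s'
    refine Finset.sum_nonneg fun s _ => Finset.sum_nonneg fun a _ => ?_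
    exact mul_nonneg (mul_nonneg (hμ.1 s) ((hπ s).1 a)) ((hQ s a).1 s')
  · calc ∑ s', ∑ s, ∑ a, μ s * π s a * Q s a s'
        = ∑ s, ∑ a, μ s * π s a * ∑ s', Q s a s' := by
          rw [Finset.sum_comm]
          refine Finset.sum_congr rfl fun s _ => ?_
          rw [Finset.sum_comm]
          exact Finset.sum_congr rfl fun a _ => (Finset.mul_sum _ _ _).symm
      _ = ∑ s, μ s * ∑ a, π s a := by
          refine Finset.sum_congr rfl fun s _ => ?_
          rw [Finset.mul_sum]
          exact Finset.sum_congr rfl fun a _ => by rw [(hQ s a).2, mul_one]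
      _ = 1 := by
          simp only [fun s => (hπ s).2, mul_one]
          exact hμ.2

lemma step_bound (μ ν : S → ℝ) (hμ : ∀ s, 0 ≤ μ s)
    (π : S → A → ℝ) (hπ : ∀ s, (∀ a, 0 ≤ π s a) ∧ ∑ a, π s a = 1)
    (Q Q' : S → A → S → ℝ)
    (hQ' : ∀ s a, Q' s a ∈ stdSimplex ℝ S) :
    l1 (fun s' => ∑ s, ∑ a, μ s * π s a * Q s a s')
       (fun s' => ∑ s, ∑ a, ν s * π s a * Q' s a s')
    ≤ l1 μ ν + ∑ s, ∑ a, μ s * π s a * l1 (Q s a) (Q' s a) := by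
  unfold l1
  calc ∑ s', |(∑ s, ∑ a, μ s * π s a * Q s a s') - ∑ s, ∑ a, ν s * π s a * Q' s a s'|
      ≤ ∑ s', ∑ s, ∑ a, (|μ s - ν s| * π s a * Q' s a s'
          + μ s * π s a * |Q s a s' - Q' s a s'|) := by
        refine Finset.sum_le_sum fun s' _ => ?_
        have h1 : (∑ s, ∑ a, μ s * π s a * Q s a s') - ∑ s, ∑ a, ν s * π s a * Q' s a s'
            = ∑ s, ∑ a, ((μ s - ν s) * π s a * Q' s a s'
              + μ s * π s a * (Q s a s' - Q' s a s')) := by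
          rw [← Finset.sum_sub_distrib]
          refine Finset.sum_congr rfl fun s _ => ?_
          rw [← Finset.sum_sub_distrib]
          exact Finset.sum_congr rfl fun a _ => by ring
        rw [h1]
        refine (Finset.abs_sum_le_sum_abs _ _).trans (Finset.sum_le_sum fun s _ => ?_)
        refine (Finset.abs_sum_le_sum_abs _ _).trans (Finset.sum_le_sum fun a _ => ?_)
        refine (abs_add_le _ _).trans (le_of_eq ?_)
        rw [abs_mul, abs_mul, abs_mul, abs_mul, abs_of_nonneg ((hπ s).1 a),
          abs_of_nonneg ((hQ' s a).1 s'), abs_of_nonneg (hμ s)]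
    _ = (∑ s, |μ s - ν s|) + ∑ s, ∑ a, μ s * π s a * ∑ s', |Q s a s' - Q' s a s'| := by
        rw [Finset.sum_comm]
        simp only [Finset.sum_add_distrib]
        congr 1
        · calc ∑ s, ∑ s', ∑ a, |μ s - ν s| * π s a * Q' s a s'
              = ∑ s, |μ s - ν s| * ∑ a, π s a * ∑ s', Q' s a s' := by
                refine Finset.sum_congr rfl fun s _ => ?_
                rw [Finset.sum_comm, Finset.mul_sum]
                refine Finset.sum_congr rfl fun a _ => ?_
                rw [Finset.mul_sum, Finset.mul_sum]
                exact Finset.sum_congr rfl fun s' _ => by ring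
            _ = ∑ s, |μ s - ν s| := by
                refine Finset.sum_congr rfl fun s _ => ?_
                simp only [fun a => (hQ' s a).2, mul_one, (hπ s).2]
        · refine Finset.sum_congr rfl fun s _ => ?_
          rw [Finset.sum_comm]
          refine Finset.sum_congr rfl fun a _ => ?_
          rw [Finset.mul_sum]

lemma sum_weight_one (μ : S → ℝ) (hμ : μ ∈ stdSimplex ℝ S)
    (π : S → A → ℝ) (hπ : ∀ s, (∀ a, 0 ≤ π s a) ∧ ∑ a, π s a = 1) :
    ∑ s, ∑ a, μ s * π s a = 1 := by
  calc ∑ s, ∑ a, μ s * π s a = ∑ s, μ s * ∑ a, π s a := by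
        exact Finset.sum_congr rfl fun s _ => (Finset.mul_sum _ _ _).symm
    _ = 1 := by simp only [fun s => (hπ s).2, mul_one]; exact hμ.2

lemma dens_mem (H : ℕ) (P : ℕ → S → A → (S → ℝ) → S → ℝ) (hP : IsKernel H P)
    (μ₁ : S → ℝ) (hμ₁ : μ₁ ∈ stdSimplex ℝ S) (π : ℕ → S → A → ℝ) (hπ : IsPolicy π) :
    ∀ k, k ≤ H → dens P μ₁ π k ∈ stdSimplex ℝ S := by
  intro k
  induction k with
  | zero => intro _; exact hμ₁
  | succ k ih =>
    intro hk
    have hk' : k < H := lt_of_lt_of_le (Nat.lt_succ_self k) hk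
    exact step_mem _ (ih hk'.le) _ (fun s => hπ k s) _
      (fun s a => hP k hk' s a _ (ih hk'.le))

end aux

/-- **Density estimation error.** For two models `M, M'` and a policy `π`,
for every `h < H` (0-indexed; the claim is about `μ^π_{·,h+2}` in 1-indexed notation):
(a) the ℓ1 density difference is bounded by the accumulated expected one-step kernel
differences (each model at its own densities); and
(b) if `M'` is `L_T`-Lipschitz in the density argument, it is also bounded by the
`(1+L_T)^{h−k}`-weighted accumulated kernel differences, both kernels evaluated at `M`'s
densities. -/
theorem density_estimation_error {S A : Type*} [Fintype S] [Fintype A] (H : ℕ)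
    (P P' : ℕ → S → A → (S → ℝ) → S → ℝ) (μ₁ : S → ℝ) (hμ₁ : μ₁ ∈ stdSimplex ℝ S)
    (hP : IsKernel H P) (hP' : IsKernel H P')
    (π : ℕ → S → A → ℝ) (hπ : IsPolicy π) (L_T : ℝ) (hLT : 0 ≤ L_T) :
    (∀ h, h < H →
      l1 (dens P μ₁ π (h + 1)) (dens P' μ₁ π (h + 1)) ≤
        ∑ k ∈ Finset.range (h + 1), ∑ s, ∑ a, dens P μ₁ π k s * π k s a *
          l1 (P k s a (dens P μ₁ π k)) (P' k s a (dens P' μ₁ π k))) ∧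
    ((∀ k, k < H → ∀ s a, ∀ μ ∈ stdSimplex ℝ S, ∀ μ' ∈ stdSimplex ℝ S,
        l1 (P' k s a μ) (P' k s a μ') ≤ L_T * l1 μ μ') →
      ∀ h, h < H →
        l1 (dens P μ₁ π (h + 1)) (dens P' μ₁ π (h + 1)) ≤
          ∑ k ∈ Finset.range (h + 1), (1 + L_T) ^ (h - k) *
            ∑ s, ∑ a, dens P μ₁ π k s * π k s a *
              l1 (P k s a (dens P μ₁ π k)) (P' k s a (dens P μ₁ π k))) := by
  have memP : ∀ k, k ≤ H → dens P μ₁ π k ∈ stdSimplex ℝ S :=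
    dens_mem H P hP μ₁ hμ₁ π hπ
  have memP' : ∀ k, k ≤ H → dens P' μ₁ π k ∈ stdSimplex ℝ S :=
    dens_mem H P' hP' μ₁ hμ₁ π hπ
  -- one-step bound, version (a)
  have keyA : ∀ h, h < H →
      l1 (dens P μ₁ π (h + 1)) (dens P' μ₁ π (h + 1)) ≤
        l1 (dens P μ₁ π h) (dens P' μ₁ π h) +
          ∑ s, ∑ a, dens P μ₁ π h s * π h s a *
            l1 (P h s a (dens P μ₁ π h)) (P' h s a (dens P' μ₁ π h)) := by
    intro h hh
    exact step_bound (dens P μ₁ π h) (dens P' μ₁ π h) (fun s => (memP h hh.le).1 s)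
      (π h) (fun s => hπ h s) (fun s a => P h s a (dens P μ₁ π h))
      (fun s a => P' h s a (dens P' μ₁ π h))
      (fun s a => hP' h hh s a _ (memP' h hh.le))
  constructor
  · intro h
    induction h with
    | zero =>
      intro h0
      have := keyA 0 h0
      rw [show dens P μ₁ π 0 = μ₁ from rfl, show dens P' μ₁ π 0 = μ₁ from rfl,
        l1_self, zero_add] at this
      simpa [Finset.sum_range_one, show dens P μ₁ π 0 = μ₁ from rfl,
        show dens P' μ₁ π 0 = μ₁ from rfl] using this
    | succ h ih =>
      intro hh
      have hhH : h < H := Nat.lt_of_succ_lt hh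
      calc l1 (dens P μ₁ π (h + 1 + 1)) (dens P' μ₁ π (h + 1 + 1))
          ≤ l1 (dens P μ₁ π (h + 1)) (dens P' μ₁ π (h + 1)) +
              ∑ s, ∑ a, dens P μ₁ π (h + 1) s * π (h + 1) s a *
                l1 (P (h + 1) s a (dens P μ₁ π (h + 1)))
                   (P' (h + 1) s a (dens P' μ₁ π (h + 1))) := keyA (h + 1) hh
        _ ≤ (∑ k ∈ Finset.range (h + 1), ∑ s, ∑ a, dens P μ₁ π k s * π k s a *
                l1 (P k s a (dens P μ₁ π k)) (P' k s a (dens P' μ₁ π k))) +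
              ∑ s, ∑ a, dens P μ₁ π (h + 1) s * π (h + 1) s a *
                l1 (P (h + 1) s a (dens P μ₁ π (h + 1)))
                   (P' (h + 1) s a (dens P' μ₁ π (h + 1))) := by
            exact add_le_add_left (ih hhH) _
        _ = _ := (Finset.sum_range_succ _ _).symm
  · intro hLip
    -- one-step bound, version (b)
    have keyB : ∀ h, h < H →
        l1 (dens P μ₁ π (h + 1)) (dens P' μ₁ π (h + 1)) ≤
          (1 + L_T) * l1 (dens P μ₁ π h) (dens P' μ₁ π h) +
            ∑ s, ∑ a, dens P μ₁ π h s * π h s a *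
              l1 (P h s a (dens P μ₁ π h)) (P' h s a (dens P μ₁ π h)) := by
      intro h hh
      have hb := keyA h hh
      have h2 : ∑ s, ∑ a, dens P μ₁ π h s * π h s a *
            l1 (P h s a (dens P μ₁ π h)) (P' h s a (dens P' μ₁ π h)) ≤
          ∑ s, ∑ a, dens P μ₁ π h s * π h s a *
            (l1 (P h s a (dens P μ₁ π h)) (P' h s a (dens P μ₁ π h)) +
              L_T * l1 (dens P μ₁ π h) (dens P' μ₁ π h)) := by
        refine Finset.sum_le_sum fun s _ => Finset.sum_le_sum fun a _ => ?_
        refine mul_le_mul_of_nonneg_left ?_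
          (mul_nonneg ((memP h hh.le).1 s) ((hπ h s).1 a))
        refine (l1_triangle _ (P' h s a (dens P μ₁ π h)) _).trans ?_
        exact add_le_add_right
          (hLip h hh s a _ (memP h hh.le) _ (memP' h hh.le)) _
      have h3 : ∑ s, ∑ a, dens P μ₁ π h s * π h s a *
            (l1 (P h s a (dens P μ₁ π h)) (P' h s a (dens P μ₁ π h)) +
              L_T * l1 (dens P μ₁ π h) (dens P' μ₁ π h)) =
          (∑ s, ∑ a, dens P μ₁ π h s * π h s a *
            l1 (P h s a (dens P μ₁ π h)) (P' h s a (dens P μ₁ π h))) +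
            L_T * l1 (dens P μ₁ π h) (dens P' μ₁ π h) := by
        simp only [mul_add, Finset.sum_add_distrib]
        congr 1
        calc ∑ s, ∑ a, dens P μ₁ π h s * π h s a *
              (L_T * l1 (dens P μ₁ π h) (dens P' μ₁ π h))
            = (∑ s, ∑ a, dens P μ₁ π h s * π h s a) *
                (L_T * l1 (dens P μ₁ π h) (dens P' μ₁ π h)) := by
              rw [Finset.sum_mul]
              exact Finset.sum_congr rfl fun s _ => (Finset.sum_mul _ _ _).symm
          _ = L_T * l1 (dens P μ₁ π h) (dens P' μ₁ π h) := by
              rw [sum_weight_one _ (memP h hh.le) _ (fun s => hπ h s), one_mul]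
      have := hb.trans (add_le_add_right h2 _)
      rw [h3] at this
      linarith
    intro h
    induction h with
    | zero =>
      intro h0
      have := keyB 0 h0
      rw [show dens P μ₁ π 0 = μ₁ from rfl, show dens P' μ₁ π 0 = μ₁ from rfl,
        l1_self, mul_zero, zero_add] at this
      simpa [Finset.sum_range_one, show dens P μ₁ π 0 = μ₁ from rfl,
        show dens P' μ₁ π 0 = μ₁ from rfl] using this
    | succ h ih =>
      intro hh
      have hhH : h < H := Nat.lt_of_succ_lt hh
      have h1L : (0:ℝ) ≤ 1 + L_T := by linarith
      calc l1 (dens P μ₁ π (h + 1 + 1)) (dens P' μ₁ π (h + 1 + 1))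
          ≤ (1 + L_T) * l1 (dens P μ₁ π (h + 1)) (dens P' μ₁ π (h + 1)) +
              ∑ s, ∑ a, dens P μ₁ π (h + 1) s * π (h + 1) s a *
                l1 (P (h + 1) s a (dens P μ₁ π (h + 1)))
                   (P' (h + 1) s a (dens P μ₁ π (h + 1))) := keyB (h + 1) hh
        _ ≤ (1 + L_T) * (∑ k ∈ Finset.range (h + 1), (1 + L_T) ^ (h - k) *
                ∑ s, ∑ a, dens P μ₁ π k s * π k s a *
                  l1 (P k s a (dens P μ₁ π k)) (P' k s a (dens P μ₁ π k))) +
              ∑ s, ∑ a, dens P μ₁ π (h + 1) s * π (h + 1) s a *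
                l1 (P (h + 1) s a (dens P μ₁ π (h + 1)))
                   (P' (h + 1) s a (dens P μ₁ π (h + 1))) := by
            exact add_le_add_left (mul_le_mul_of_nonneg_left (ih hhH) h1L) _
        _ = _ := by
            conv_rhs => rw [Finset.sum_range_succ]
            rw [Nat.sub_self, pow_zero, one_mul, Finset.mul_sum]
            congr 1
            refine Finset.sum_congr rfl fun k hk => ?_
            have hk' : k ≤ h := Nat.lt_succ_iff.mp (Finset.mem_range.mp hk)
            have : h + 1 - k = (h - k) + 1 := by omega
            rw [this, pow_succ]
            ring
end

section
/- Let M be a mean-field MDP satisfying the Lipschitz continuity assumption: there are L_T, L_r ≥ 0 such that for all policies π, π' ∈ Π and all h, s, a: ‖P_{M,h}(·|s,a,μ^π_{M,h}) − P_{M,h}(·|s,a,μ^{π'}_{M,h})‖₁ ≤ L_T·‖μ^π_{M,h} − μ^{π'}_{M,h}‖₁ and |r_h(s,a,μ^π_{M,h}) − r_h(s,a,μ^{π'}_{M,h})| ≤ L_r·‖μ^π_{M,h} − μ^{π'}_{M,h}‖₁. Then for all π, π' ∈ Π and all h, s, a: ‖P_{M,h}(·|s,a,μ^π_{M,h}) −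 P_{M,h}(·|s,a,μ^{π'}_{M,h})‖₁ ≤ L_T · d_{∞,1}(π,π') · Σ_{h'=1}^{h} (1+L_T)^{h−h'}, and |r_h(s,a,μ^π_{M,h}) − r_h(s,a,μ^{π'}_{M,h})| ≤ L_r · d_{∞,1}(π,π') · Σ_{h'=1}^{h} (1+L_T)^{h−h'}. (Lipschitz continuity of the policy-aware model converted from an MF-MDP.) -/
lemma l1_nonneg {X : Type*} [Fintype X] (p q : X → ℝ) : 0 ≤ l1 p q :=
  Finset.sum_nonneg fun x _ => abs_nonneg _

lemma dens_simplex {S A : Type*} [Fintype S] [Fintype A] (H : ℕ)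
    (P : ℕ → S → A → (S → ℝ) → S → ℝ) (μ₁ : S → ℝ) (hμ₁ : μ₁ ∈ stdSimplex ℝ S)
    (hP : IsKernel H P) (π : ℕ → S → A → ℝ) (hπ : IsPolicy π) :
    ∀ k, k ≤ H → dens P μ₁ π k ∈ stdSimplex ℝ S := by
  intro k
  induction k with
  | zero => intro _; exact hμ₁
  | succ k ih =>
    intro hk
    have hk' : k < H := hk
    have hd := ih (le_of_lt hk')
    refine ⟨fun s' => ?_, ?_⟩
    · refine Finset.sum_nonneg fun s _ => Finset.sum_nonneg fun a _ => ?_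
      exact mul_nonneg (mul_nonneg (hd.1 s) ((hπ k s).1 a)) ((hP k hk' s a _ hd).1 s')
    · show ∑ s', ∑ s, ∑ a,
        dens P μ₁ π k s * π k s a * P k s a (dens P μ₁ π k) s' = 1
      rw [Finset.sum_comm]
      have h1 : ∀ s : S, ∑ s', ∑ a,
          dens P μ₁ π k s * π k s a * P k s a (dens P μ₁ π k) s'
          = dens P μ₁ π k s := by
        intro s
        rw [Finset.sum_comm]
        have h2 : ∀ a : A, ∑ s', dens P μ₁ π k s * π k s a * P k s a (dens P μ₁ π k) s'
            = dens P μ₁ π k s * π k s a := by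
          intro a
          rw [← Finset.mul_sum, (hP k hk' s a _ hd).2, mul_one]
        rw [Finset.sum_congr rfl fun a _ => h2 a, ← Finset.mul_sum, (hπ k s).2, mul_one]
      rw [Finset.sum_congr rfl fun s _ => h1 s, hd.2]

lemma tri_sum {S A : Type*} [Fintype S] [Fintype A] (c : S → A → ℝ) (g : S → A → S → ℝ) :
    ∑ s', ∑ s, ∑ a, c s a * g s a s' = ∑ s, ∑ a, c s a * ∑ s', g s a s' := by
  rw [Finset.sum_comm]
  refine Finset.sum_congr rfl fun s _ => ?_
  rw [Finset.sum_comm]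
  refine Finset.sum_congr rfl fun a _ => ?_
  rw [Finset.mul_sum]

lemma l1_dens_le {S A : Type*} [Fintype S] [Fintype A] (H : ℕ)
    (P : ℕ → S → A → (S → ℝ) → S → ℝ)
    (μ₁ : S → ℝ) (hμ₁ : μ₁ ∈ stdSimplex ℝ S) (hP : IsKernel H P)
    (L_T : ℝ) (hLT : 0 ≤ L_T)
    (hPlip : ∀ π π' : ℕ → S → A → ℝ, IsPolicy π → IsPolicy π' → ∀ k, k < H → ∀ s a,
      l1 (P k s a (dens P μ₁ π k)) (P k s a (dens P μ₁ π' k)) ≤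
        L_T * l1 (dens P μ₁ π k) (dens P μ₁ π' k))
    (π π' : ℕ → S → A → ℝ) (hπ : IsPolicy π) (hπ' : IsPolicy π')
    (D : ℝ) (hD : ∀ k, k < H → ∀ s, l1 (π k s) (π' k s) ≤ D) :
    ∀ k, k ≤ H → l1 (dens P μ₁ π k) (dens P μ₁ π' k) ≤
      D * ∑ j ∈ Finset.range k, (1 + L_T) ^ j := by
  intro k
  induction k with
  | zero => intro _; simp [l1, dens]
  | succ k ih =>
    intro hk
    have hk' : k < H := hk
    set μ := dens P μ₁ π k with hμdef
    set ν := dens P μ₁ π' k with hνdef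
    have hμ : μ ∈ stdSimplex ℝ S := dens_simplex H P μ₁ hμ₁ hP π hπ k hk'.le
    have hν : ν ∈ stdSimplex ℝ S := dens_simplex H P μ₁ hμ₁ hP π' hπ' k hk'.le
    have step : l1 (dens P μ₁ π (k+1)) (dens P μ₁ π' (k+1)) ≤
        (1 + L_T) * l1 μ ν + D := by
      have hPμ := fun s a => hP k hk' s a μ hμ
      have hPν := fun s a => hP k hk' s a ν hν
      calc l1 (dens P μ₁ π (k+1)) (dens P μ₁ π' (k+1))
          = ∑ s', |∑ s, ∑ a, (μ s * π k s a * P k s a μ s'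
              - ν s * π' k s a * P k s a ν s')| := by
            unfold l1
            refine Finset.sum_congr rfl fun s' _ => ?_
            simp only [dens, ← hμdef, ← hνdef, ← Finset.sum_sub_distrib]
        _ ≤ ∑ s', ∑ s, ∑ a, |μ s * π k s a * P k s a μ s'
              - ν s * π' k s a * P k s a ν s'| := by
            refine Finset.sum_le_sum fun s' _ => ?_
            exact (Finset.abs_sum_le_sum_abs _ _).trans
              (Finset.sum_le_sum fun s _ => Finset.abs_sum_le_sum_abs _ _)
        _ ≤ ∑ s', ∑ s, ∑ a, ((|μ s - ν s| * π k s a) * P k s a μ s'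
              + (ν s * |π k s a - π' k s a|) * P k s a μ s'
              + (ν s * π' k s a) * |P k s a μ s' - P k s a ν s'|) := by
            refine Finset.sum_le_sum fun s' _ => Finset.sum_le_sum fun s _ =>
              Finset.sum_le_sum fun a _ => ?_
            have hid : μ s * π k s a * P k s a μ s' - ν s * π' k s a * P k s a ν s'
                = (μ s - ν s) * π k s a * P k s a μ s'
                  + ν s * (π k s a - π' k s a) * P k s a μ s'
                  + ν s * π' k s a * (P k s a μ s' - P k s a ν s') := by ring
            rw [hid]
            refine (abs_add_le _ _).trans (add_le_add ((abs_add_le _ _).trans (add_le_add ?_ ?_)) ?_)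
            · rw [abs_mul, abs_mul, abs_of_nonneg ((hπ k s).1 a),
                abs_of_nonneg ((hPμ s a).1 s')]
            · rw [abs_mul, abs_mul, abs_of_nonneg (hν.1 s), abs_of_nonneg ((hPμ s a).1 s')]
            · rw [abs_mul, abs_mul, abs_of_nonneg (hν.1 s), abs_of_nonneg ((hπ' k s).1 a)]
        _ = (∑ s', ∑ s, ∑ a, (|μ s - ν s| * π k s a) * P k s a μ s')
              + (∑ s', ∑ s, ∑ a, (ν s * |π k s a - π' k s a|) * P k s a μ s')
              + (∑ s', ∑ s, ∑ a, (ν s * π' k s a) * |P k s a μ s' - P k s a ν s'|) := by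
            simp only [Finset.sum_add_distrib]
        _ ≤ l1 μ ν + D + L_T * l1 μ ν := by
            refine add_le_add (add_le_add ?_ ?_) ?_
            · rw [tri_sum (fun s a => |μ s - ν s| * π k s a) (fun s a s' => P k s a μ s')]
              refine le_of_eq ?_
              calc ∑ s, ∑ a, |μ s - ν s| * π k s a * ∑ s', P k s a μ s'
                  = ∑ s, ∑ a, |μ s - ν s| * π k s a := by
                    refine Finset.sum_congr rfl fun s _ => Finset.sum_congr rfl fun a _ => ?_
                    rw [(hPμ s a).2, mul_one]
                _ = ∑ s, |μ s - ν s| := by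
                    refine Finset.sum_congr rfl fun s _ => ?_
                    rw [← Finset.mul_sum, (hπ k s).2, mul_one]
                _ = l1 μ ν := rfl
            · rw [tri_sum (fun s a => ν s * |π k s a - π' k s a|) (fun s a s' => P k s a μ s')]
              calc ∑ s, ∑ a, ν s * |π k s a - π' k s a| * ∑ s', P k s a μ s'
                  = ∑ s, ν s * l1 (π k s) (π' k s) := by
                    refine Finset.sum_congr rfl fun s _ => ?_
                    rw [Finset.sum_congr rfl fun a _ => by rw [(hPμ s a).2, mul_one],
                      ← Finset.mul_sum]
                    rfl
                _ ≤ ∑ s, ν s * D :=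
                    Finset.sum_le_sum fun s _ =>
                      mul_le_mul_of_nonneg_left (hD k hk' s) (hν.1 s)
                _ = D := by rw [← Finset.sum_mul, hν.2, one_mul]
            · rw [tri_sum (fun s a => ν s * π' k s a)
                (fun s a s' => |P k s a μ s' - P k s a ν s'|)]
              calc ∑ s, ∑ a, ν s * π' k s a * ∑ s', |P k s a μ s' - P k s a ν s'|
                  ≤ ∑ s, ∑ a, ν s * π' k s a * (L_T * l1 μ ν) := by
                    refine Finset.sum_le_sum fun s _ => Finset.sum_le_sum fun a _ =>
                      mul_le_mul_of_nonneg_left ?_ (mul_nonneg (hν.1 s) ((hπ' k s).1 a))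
                    exact hPlip π π' hπ hπ' k hk' s a
                _ = L_T * l1 μ ν := by
                    simp only [← Finset.sum_mul]
                    have h1 : ∑ s, ∑ a, ν s * π' k s a = 1 := by
                      rw [Finset.sum_congr rfl fun s _ => by
                        rw [← Finset.mul_sum, (hπ' k s).2, mul_one], hν.2]
                    rw [h1, one_mul]
        _ = (1 + L_T) * l1 μ ν + D := by ring
    refine step.trans ?_
    rw [geom_sum_succ]
    calc (1 + L_T) * l1 μ ν + D
        ≤ (1 + L_T) * (D * ∑ j ∈ Finset.range k, (1 + L_T) ^ j) + D := by
          refine add_le_add (mul_le_mul_of_nonneg_left (ih hk'.le) (by linarith)) le_rfl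
      _ = D * ((1 + L_T) * ∑ j ∈ Finset.range k, (1 + L_T) ^ j + 1) := by ring

/-- **Lipschitz continuity of the policy-aware model.** If the MF-MDP `M` is
Lipschitz at induced densities (transitions with constant `L_T`, rewards with constant `L_r`),
then for all policies `π, π'` and all `h < H` (0-indexed), the kernels and rewards frozen at
the induced densities are Lipschitz in the policy:
`‖P_{M,h}(·|s,a,μ^π_{M,h}) − P_{M,h}(·|s,a,μ^{π'}_{M,h})‖₁ ≤ L_T·d_{∞,1}(π,π')·Σ_{h'=1}^{h+1}(1+L_T)^{h+1−h'}`
and similarly for rewards with `L_r`; `d_{∞,1}(π,π')` is represented by an arbitrary upper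
bound `D` on all `‖π_h(·|s) − π'_h(·|s)‖₁`. -/
theorem pam_lipschitz {S A : Type*} [Fintype S] [Fintype A] (H : ℕ)
    (P : ℕ → S → A → (S → ℝ) → S → ℝ) (r : ℕ → S → A → (S → ℝ) → ℝ)
    (μ₁ : S → ℝ) (hμ₁ : μ₁ ∈ stdSimplex ℝ S) (hP : IsKernel H P)
    (L_T L_r : ℝ) (hLT : 0 ≤ L_T) (hLr : 0 ≤ L_r)
    (hPlip : ∀ π π' : ℕ → S → A → ℝ, IsPolicy π → IsPolicy π' → ∀ k, k < H → ∀ s a,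
      l1 (P k s a (dens P μ₁ π k)) (P k s a (dens P μ₁ π' k)) ≤
        L_T * l1 (dens P μ₁ π k) (dens P μ₁ π' k))
    (hrlip : ∀ π π' : ℕ → S → A → ℝ, IsPolicy π → IsPolicy π' → ∀ k, k < H → ∀ s a,
      |r k s a (dens P μ₁ π k) - r k s a (dens P μ₁ π' k)| ≤
        L_r * l1 (dens P μ₁ π k) (dens P μ₁ π' k))
    (π π' : ℕ → S → A → ℝ) (hπ : IsPolicy π) (hπ' : IsPolicy π')
    (D : ℝ) (hD : ∀ k, k < H → ∀ s, l1 (π k s) (π' k s) ≤ D) :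
    ∀ k, k < H → ∀ s a,
      l1 (P k s a (dens P μ₁ π k)) (P k s a (dens P μ₁ π' k)) ≤
        L_T * D * ∑ j ∈ Finset.range (k + 1), (1 + L_T) ^ j ∧
      |r k s a (dens P μ₁ π k) - r k s a (dens P μ₁ π' k)| ≤
        L_r * D * ∑ j ∈ Finset.range (k + 1), (1 + L_T) ^ j := by
  intro k hk s a
  have hS : Nonempty S := by
    by_contra h
    rw [not_nonempty_iff] at h
    have h1 := hμ₁.2
    rw [Finset.univ_eq_empty, Finset.sum_empty] at h1
    exact one_ne_zero h1.symm
  obtain ⟨s₀⟩ := hS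
  have hD0 : 0 ≤ D := le_trans (l1_nonneg _ _) (hD k hk s₀)
  have hdens := l1_dens_le H P μ₁ hμ₁ hP L_T hLT hPlip π π' hπ hπ' D hD k hk.le
  have hmono : D * ∑ j ∈ Finset.range k, (1 + L_T) ^ j ≤
      D * ∑ j ∈ Finset.range (k + 1), (1 + L_T) ^ j := by
    refine mul_le_mul_of_nonneg_left ?_ hD0
    refine Finset.sum_le_sum_of_subset_of_nonneg (by simp) fun j _ _ => ?_
    positivity
  constructor
  · calc l1 (P k s a (dens P μ₁ π k)) (P k s a (dens P μ₁ π' k))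
        ≤ L_T * l1 (dens P μ₁ π k) (dens P μ₁ π' k) := hPlip π π' hπ hπ' k hk s a
      _ ≤ L_T * (D * ∑ j ∈ Finset.range (k + 1), (1 + L_T) ^ j) :=
          mul_le_mul_of_nonneg_left (hdens.trans hmono) hLT
      _ = L_T * D * ∑ j ∈ Finset.range (k + 1), (1 + L_T) ^ j := by ring
  · calc |r k s a (dens P μ₁ π k) - r k s a (dens P μ₁ π' k)|
        ≤ L_r * l1 (dens P μ₁ π k) (dens P μ₁ π' k) := hrlip π π' hπ hπ' k hk s a
      _ ≤ L_r * (D * ∑ j ∈ Finset.range (k + 1), (1 + L_T) ^ j) :=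
          mul_le_mul_of_nonneg_left (hdens.trans hmono) hLr
      _ = L_r * D * ∑ j ∈ Finset.range (k + 1), (1 + L_T) ^ j := by ring
end
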